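/- Let G = ⟨a, c | U(a,c), [a,c^n]⟩ where U has exponent sum 1 in a and 0 in c. Then the commutator subgroup G′ has the cyclic presentation G_n(w) with w(x_1,…,x_n) = x_1^{α_1} x_{1+γ_1}^{α_2} x_{1+γ_1+γ_2}^{α_3} ⋯ x_{1+γ_1+⋯+γ_{k-1}}^{α_k} (subscripts mod n), and G is isomorphic to the natural HNN extension Ĝ_n(w). -/

import Mathlib

/-- The word `U(a,c) = a^{α₁}c^{γ₁}⋯a^{α_k}c^{γ_k}` in the free group on `{a, c}`
(with `a` coded by `true` and `c` by `false`). -/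
def Uword (k : ℕ) (α γ : ℕ → ℤ) : FreeGroup Bool :=
  ((List.range k).map fun i =>
    (FreeGroup.of true) ^ (α i) * (FreeGroup.of false) ^ (γ i)).prod

/-- The relators of the presentation `G = ⟨a, c ∣ U(a,c), [a,cⁿ]⟩`. -/
def relsX (n k : ℕ) (α γ : ℕ → ℤ) : Set (FreeGroup Bool) :=
  {Uword k α γ,
    (FreeGroup.of true)⁻¹ * ((FreeGroup.of false) ^ n)⁻¹ *
      FreeGroup.of true * (FreeGroup.of false) ^ n}

/-- The shift endomorphism `θ` of the free group on `ZMod n`. -/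
def shiftEnd (n : ℕ) [NeZero n] : Monoid.End (FreeGroup (ZMod n)) :=
  FreeGroup.lift fun i => FreeGroup.of (i + 1)

/-- The relators of the cyclic presentation `G_n(w)`. -/
def cycRels (n : ℕ) [NeZero n] (w : FreeGroup (ZMod n)) : Set (FreeGroup (ZMod n)) :=
  Set.range fun j : ZMod n => (shiftEnd n ^ j.val) w

/-- The cyclically presented group `G_n(w)`. -/
abbrev Gn (n : ℕ) [NeZero n] (w : FreeGroup (ZMod n)) := PresentedGroup (cycRels n w)

/-- The word `w(x₁,…,xₙ) = x₁^{α₁} x_{1+γ₁}^{α₂} x_{1+γ₁+γ₂}^{α₃} ⋯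
x_{1+γ₁+⋯+γ_{k-1}}^{α_k}` (subscripts mod `n`). -/
def wWord (n : ℕ) [NeZero n] (k : ℕ) (α γ : ℕ → ℤ) : FreeGroup (ZMod n) :=
  ((List.range k).map fun i =>
    (FreeGroup.of ((1 + ∑ j ∈ Finset.range i, γ j : ℤ) : ZMod n)) ^ (α i)).prod

namespace CPaux

variable {G : Type*} [Group G]

/-- Telescoping lemma. -/
lemma tele (A T : G) (α γ : ℕ → ℤ) (k : ℕ) :
    ((List.range k).map fun i => A ^ α i * T ^ γ i).prod
    = ((List.range k).map fun i =>
        T ^ (∑ j ∈ Finset.range i, γ j) * A ^ α i * T ^ (-(∑ j ∈ Finset.range i, γ j))).prod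
      * T ^ (∑ j ∈ Finset.range k, γ j) := by
  induction k with
  | zero => simp
  | succ k ih =>
    rw [List.range_succ, List.map_append, List.map_append, List.prod_append, List.prod_append,
      ih, Finset.sum_range_succ, List.map_singleton, List.map_singleton,
      List.prod_singleton, List.prod_singleton]
    simp only [zpow_add, zpow_neg, mul_assoc, inv_mul_cancel_left]

lemma zprod_const (g : G) (α : ℕ → ℤ) (k : ℕ) :
    ((List.range k).map fun i => g ^ α i).prod = g ^ (∑ i ∈ Finset.range k, α i) := by
  induction k with
  | zero => simp
  | succ k ih =>
    rw [List.range_succ, List.map_append, List.prod_append, Finset.sum_range_succ,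
      List.map_singleton, List.prod_singleton, ih, zpow_add]

variable (n : ℕ) [NeZero n] (k : ℕ) (α γ : ℕ → ℤ)

/-- partial sums of γ -/
noncomputable abbrev S (i : ℕ) : ℤ := ∑ j ∈ Finset.range i, γ j

/-- generalized word -/
noncomputable def pword (b : ℤ) : FreeGroup (ZMod n) :=
  ((List.range k).map fun i => (FreeGroup.of ((b + S γ i : ℤ) : ZMod n)) ^ (α i)).prod

lemma wWord_eq : wWord n k α γ = pword n k α γ 1 := rfl

lemma shiftEnd_pow_of (m : ℕ) (i : ZMod n) :
    (shiftEnd n ^ m) (FreeGroup.of i) = FreeGroup.of (i + m) := by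
  induction m with
  | zero => simp
  | succ m ih =>
    rw [pow_succ']
    show (shiftEnd n * shiftEnd n ^ m) (FreeGroup.of i) = _
    rw [Monoid.End.coe_mul]
    simp only [Function.comp_apply, ih]
    show FreeGroup.lift _ _ = _
    rw [FreeGroup.lift_apply_of]
    push_cast
    ring_nf

lemma shiftEnd_pow_pword (m : ℕ) (b : ℤ) :
    (shiftEnd n ^ m) (pword n k α γ b) = pword n k α γ (b + m) := by
  unfold pword
  rw [map_list_prod, List.map_map]
  congr 1
  apply List.map_congr_left
  intro i _
  simp only [Function.comp_apply, map_zpow, shiftEnd_pow_of]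
  congr 2
  push_cast
  ring

lemma pword_congr {b₁ b₂ : ℤ} (h : (b₁ : ZMod n) = (b₂ : ZMod n)) :
    pword n k α γ b₁ = pword n k α γ b₂ := by
  unfold pword
  congr 1
  apply List.map_congr_left
  intro i _
  congr 2
  push_cast
  rw [h]

end CPaux

section
variable (n : ℕ) [NeZero n] (k : ℕ) (α γ : ℕ → ℤ)

namespace CPaux
set_option linter.unusedSectionVars false

/-- The quotient map onto `Gn`. -/
noncomputable def mkG : FreeGroup (ZMod n) →* Gn n (wWord n k α γ) :=
  QuotientGroup.mk' _

lemma mkG_of (x : ZMod n) : mkG n k α γ (FreeGroup.of x) = PresentedGroup.of x := rfl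

lemma mk_pword (b : ℤ) : mkG n k α γ (pword n k α γ b) = 1 := by
  set m : ℕ := ((b - 1 : ℤ) : ZMod n).val with hm
  have hcast : ((m : ℕ) : ZMod n) = ((b - 1 : ℤ) : ZMod n) := by
    rw [hm, ZMod.natCast_val, ZMod.cast_id]
  have h1 : pword n k α γ b = (shiftEnd n ^ m) (wWord n k α γ) := by
    rw [wWord_eq, shiftEnd_pow_pword]
    apply pword_congr
    push_cast [hcast]
    ring
  rw [h1]
  apply (QuotientGroup.eq_one_iff _).mpr
  apply Subgroup.subset_normalClosure
  refine ⟨(m : ZMod n), ?_⟩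
  show (shiftEnd n ^ ((m : ZMod n)).val) (wWord n k α γ) = _
  rw [wWord_eq, shiftEnd_pow_pword, shiftEnd_pow_pword]
  apply pword_congr
  push_cast [ZMod.natCast_val, ZMod.cast_id]
  ring

lemma lift_shift (m : ℕ) (c : ℤ) :
    FreeGroup.lift (fun i => (PresentedGroup.of (i + m) : Gn n (wWord n k α γ)))
      (pword n k α γ c) = mkG n k α γ (pword n k α γ (c + m)) := by
  unfold pword
  rw [map_list_prod, map_list_prod, List.map_map, List.map_map]
  congr 1
  apply List.map_congr_left
  intro i _
  simp only [Function.comp_apply, map_zpow, FreeGroup.lift_apply_of, mkG_of]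
  congr 2
  push_cast
  ring

lemma tauh (m : ℕ) : ∀ r ∈ cycRels n (wWord n k α γ),
    FreeGroup.lift (fun i => (PresentedGroup.of (i + m) : Gn n (wWord n k α γ))) r = 1 := by
  rintro r ⟨j, rfl⟩
  dsimp only
  rw [wWord_eq, shiftEnd_pow_pword]
  exact (lift_shift n k α γ m _).trans (mk_pword n k α γ _)

/-- The shift homomorphism by `m` on `Gn`. -/
noncomputable def tau (m : ℕ) : Gn n (wWord n k α γ) →* Gn n (wWord n k α γ) :=
  PresentedGroup.toGroup (tauh n k α γ m)

lemma tau_of (m : ℕ) (i : ZMod n) :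
    tau n k α γ m (PresentedGroup.of i) = PresentedGroup.of (i + m) :=
  PresentedGroup.toGroup.of _

lemma cast_nsub_one : (((n - 1 : ℕ) : ZMod n)) = -1 := by
  have hn : 1 ≤ n := Nat.one_le_iff_ne_zero.mpr (NeZero.ne n)
  push_cast [Nat.cast_sub hn]
  simp [ZMod.natCast_self]

/-- The shift automorphism of `Gn`. -/
noncomputable def phi : MulAut (Gn n (wWord n k α γ)) :=
  MonoidHom.toMulEquiv (tau n k α γ 1) (tau n k α γ (n - 1))
    (by
      apply PresentedGroup.ext
      intro i
      simp only [MonoidHom.comp_apply, tau_of, MonoidHom.id_apply, cast_nsub_one]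
      congr 1
      push_cast
      ring)
    (by
      apply PresentedGroup.ext
      intro i
      simp only [MonoidHom.comp_apply, tau_of, MonoidHom.id_apply, cast_nsub_one]
      congr 1
      push_cast
      ring)

lemma phi_of (i : ZMod n) :
    phi n k α γ (PresentedGroup.of i) = PresentedGroup.of (i + 1) := by
  show tau n k α γ 1 (PresentedGroup.of i) = _
  rw [tau_of]; push_cast; ring_nf

lemma phi_inv_of (i : ZMod n) :
    (phi n k α γ)⁻¹ (PresentedGroup.of i) = PresentedGroup.of (i - 1) := by
  have := phi_of n k α γ (i - 1)
  rw [sub_add_cancel] at this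
  rw [← this]
  exact ((phi n k α γ).symm_apply_apply _)

lemma phi_zpow : ∀ (z : ℤ) (i : ZMod n),
    (phi n k α γ ^ z) (PresentedGroup.of i) = PresentedGroup.of (i + z) := by
  intro z
  induction z using Int.induction_on with
  | zero => simp
  | succ m ih =>
    intro i
    rw [zpow_add_one]
    show (phi n k α γ ^ (m : ℤ)) (phi n k α γ (PresentedGroup.of i)) = _
    rw [phi_of, ih]
    congr 1
    push_cast
    ring
  | pred m ih =>
    intro i
    rw [zpow_sub_one]
    show (phi n k α γ ^ (-m : ℤ)) ((phi n k α γ)⁻¹ (PresentedGroup.of i)) = _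
    rw [phi_inv_of, ih]
    congr 1
    push_cast
    ring

end CPaux
end

section
variable (n : ℕ) [NeZero n] (k : ℕ) (α γ : ℕ → ℤ)

namespace CPaux
set_option linter.unusedSectionVars false

/-- The big group `G`. -/
abbrev GX := PresentedGroup (relsX n k α γ)

noncomputable def A : GX n k α γ := PresentedGroup.of true
noncomputable def C : GX n k α γ := PresentedGroup.of false

noncomputable def mkX : FreeGroup Bool →* GX n k α γ := QuotientGroup.mk' _

lemma relU : ((List.range k).map fun i => A n k α γ ^ α i * C n k α γ ^ γ i).prod = 1 := by
  have h : mkX n k α γ (Uword k α γ) = 1 := by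
    apply (QuotientGroup.eq_one_iff _).mpr
    exact Subgroup.subset_normalClosure (Or.inl rfl)
  rw [← h]
  unfold Uword
  rw [map_list_prod, List.map_map]
  congr 1

lemma relC : C n k α γ ^ (n : ℤ) * A n k α γ * (C n k α γ ^ (n : ℤ))⁻¹ = A n k α γ := by
  have h : mkX n k α γ ((FreeGroup.of true)⁻¹ * ((FreeGroup.of false) ^ n)⁻¹ *
      FreeGroup.of true * (FreeGroup.of false) ^ n) = 1 := by
    apply (QuotientGroup.eq_one_iff _).mpr
    exact Subgroup.subset_normalClosure (Or.inr rfl)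
  simp only [map_mul, map_inv, map_pow] at h
  have h' : (A n k α γ)⁻¹ * (C n k α γ ^ n)⁻¹ * A n k α γ * C n k α γ ^ n = 1 := h
  have key := congrArg (fun z => C n k α γ ^ n * A n k α γ * z) h'
  simp only [mul_assoc, mul_inv_cancel_left, mul_one, inv_mul_cancel_left] at key
  rw [zpow_natCast, mul_inv_eq_iff_eq_mul]
  exact key.symm

/-- the generators of the commutator subgroup, as conjugates -/
noncomputable def x (m : ℤ) : GX n k α γ := MulAut.conj (C n k α γ ^ m) (A n k α γ)

lemma x_def (m : ℤ) : x n k α γ m = C n k α γ ^ m * A n k α γ * C n k α γ ^ (-m) := by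
  unfold x
  rw [MulAut.conj_apply, zpow_neg]

lemma x_add (a b : ℤ) : x n k α γ (a + b) = MulAut.conj (C n k α γ ^ a) (x n k α γ b) := by
  simp only [x, zpow_add, map_mul, MulAut.mul_apply]

lemma x_n : x n k α γ (n : ℤ) = A n k α γ := by
  unfold x
  rw [MulAut.conj_apply]
  exact relC n k α γ

lemma x_add_n (m : ℤ) : x n k α γ (m + n) = x n k α γ m := by
  rw [x_add, x_n]
  rfl

lemma x_sub_n (m : ℤ) : x n k α γ (m - n) = x n k α γ m := by
  have := x_add_n n k α γ (m - n)
  rw [sub_add_cancel] at this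
  exact this.symm

lemma x_shift (m : ℤ) : ∀ q : ℤ, x n k α γ (m + n * q) = x n k α γ m := by
  intro q
  induction q using Int.induction_on with
  | zero => simp
  | succ q ih =>
    have e : m + (n : ℤ) * (q + 1) = (m + n * q) + n := by ring
    rw [e, x_add_n, ih]
  | pred q ih =>
    have e : m + (n : ℤ) * (-q - 1) = (m + n * (-q)) - n := by ring
    rw [e, x_sub_n, ih]

lemma x_congr {m₁ m₂ : ℤ} (h : (m₁ : ZMod n) = (m₂ : ZMod n)) :
    x n k α γ m₁ = x n k α γ m₂ := by
  have hmod := (ZMod.intCast_eq_intCast_iff _ _ _).mp h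
  obtain ⟨q, hq⟩ := hmod.dvd
  have e : m₁ = m₂ + n * (-q) := by linarith
  rw [e, x_shift]

end CPaux
end

section
variable (n : ℕ) [NeZero n] (k : ℕ) (α γ : ℕ → ℤ)

namespace CPaux
set_option linter.unusedSectionVars false

lemma inner_prod (hγ : ∑ i ∈ Finset.range k, γ i = 0) :
    ((List.range k).map fun i =>
      C n k α γ ^ S γ i * A n k α γ ^ α i * C n k α γ ^ (-(S γ i))).prod = 1 := by
  have t := tele (A n k α γ) (C n k α γ) α γ k
  rw [relU, hγ, zpow_zero, mul_one] at t
  exact t.symm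

lemma prodx (hγ : ∑ i ∈ Finset.range k, γ i = 0) (b : ℤ) :
    ((List.range k).map fun i => x n k α γ (b + S γ i) ^ α i).prod = 1 := by
  have hstep : ∀ i : ℕ, x n k α γ (b + S γ i) ^ α i
      = MulAut.conj (C n k α γ ^ b)
          (C n k α γ ^ S γ i * A n k α γ ^ α i * C n k α γ ^ (-(S γ i))) := by
    intro i
    rw [x_add, ← map_zpow]
    congr 1
    show (MulAut.conj (C n k α γ ^ S γ i) (A n k α γ)) ^ α i = _
    rw [← map_zpow, MulAut.conj_apply, zpow_neg]
  calc ((List.range k).map fun i => x n k α γ (b + S γ i) ^ α i).prod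
      = ((List.range k).map ((MulAut.conj (C n k α γ ^ b)) ∘ fun i =>
          C n k α γ ^ S γ i * A n k α γ ^ α i * C n k α γ ^ (-(S γ i)))).prod := by
        congr 1
        apply List.map_congr_left
        intro i _
        exact hstep i
    _ = MulAut.conj (C n k α γ ^ b) ((List.range k).map (fun i =>
          C n k α γ ^ S γ i * A n k α γ ^ α i * C n k α γ ^ (-(S γ i)))).prod := by
        rw [← List.map_map, ← map_list_prod]
    _ = 1 := by rw [inner_prod n k α γ hγ, map_one]

lemma val_coe_int (i : ZMod n) : (((i.val : ℤ)) : ZMod n) = i := by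
  push_cast [ZMod.natCast_val, ZMod.cast_id]
  rfl

lemma lift_x_pword (c : ℤ) :
    FreeGroup.lift (fun i : ZMod n => x n k α γ (i.val : ℤ)) (pword n k α γ c)
      = ((List.range k).map fun i => x n k α γ (c + S γ i) ^ α i).prod := by
  unfold pword
  rw [map_list_prod, List.map_map]
  congr 1
  apply List.map_congr_left
  intro i _
  simp only [Function.comp_apply, map_zpow, FreeGroup.lift_apply_of]
  congr 1
  apply x_congr
  rw [val_coe_int]

lemma psih (hγ : ∑ i ∈ Finset.range k, γ i = 0) :
    ∀ r ∈ cycRels n (wWord n k α γ),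
      FreeGroup.lift (fun i : ZMod n => x n k α γ (i.val : ℤ)) r = 1 := by
  rintro r ⟨j, rfl⟩
  dsimp only
  rw [wWord_eq, shiftEnd_pow_pword, lift_x_pword, prodx n k α γ hγ]

/-- The homomorphism `Gn → G` onto the commutator subgroup. -/
noncomputable def psi0 (hγ : ∑ i ∈ Finset.range k, γ i = 0) :
    Gn n (wWord n k α γ) →* GX n k α γ :=
  PresentedGroup.toGroup (psih n k α γ hγ)

lemma psi0_of (hγ : ∑ i ∈ Finset.range k, γ i = 0) (i : ZMod n) :
    psi0 n k α γ hγ (PresentedGroup.of i) = x n k α γ (i.val : ℤ) :=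
  PresentedGroup.toGroup.of _

lemma psi_compat (hγ : ∑ i ∈ Finset.range k, γ i = 0) :
    ∀ g : Multiplicative ℤ,
      (psi0 n k α γ hγ).comp
          ((zpowersHom (MulAut (Gn n (wWord n k α γ))) (phi n k α γ) g).toMonoidHom)
        = (MulAut.conj (zpowersHom (GX n k α γ) (C n k α γ) g)).toMonoidHom.comp
            (psi0 n k α γ hγ) := by
  intro g
  apply PresentedGroup.ext
  intro i
  simp only [MonoidHom.comp_apply, MulEquiv.coe_toMonoidHom, zpowersHom_apply]
  rw [phi_zpow, psi0_of, psi0_of, ← x_add]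
  apply x_congr
  push_cast [ZMod.natCast_val, ZMod.cast_id]
  ring

/-- The homomorphism from the HNN extension to `G`. -/
noncomputable def Psi (hγ : ∑ i ∈ Finset.range k, γ i = 0) :
    (Gn n (wWord n k α γ) ⋊[zpowersHom (MulAut (Gn n (wWord n k α γ))) (phi n k α γ)]
        Multiplicative ℤ) →* GX n k α γ :=
  SemidirectProduct.lift (psi0 n k α γ hγ) (zpowersHom (GX n k α γ) (C n k α γ))
    (psi_compat n k α γ hγ)

end CPaux
end

section
variable (n : ℕ) [NeZero n] (k : ℕ) (α γ : ℕ → ℤ)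

namespace CPaux
set_option linter.unusedSectionVars false

open SemidirectProduct

/-- The natural HNN extension. -/
abbrev Ghat := (Gn n (wWord n k α γ)) ⋊[zpowersHom (MulAut (Gn n (wWord n k α γ)))
  (phi n k α γ)] Multiplicative ℤ

/-- images of the generators a, c -/
noncomputable def fPhi : Bool → Ghat n k α γ := fun b =>
  cond b (inl (PresentedGroup.of (0 : ZMod n))) (inr (Multiplicative.ofAdd 1))

lemma inr_zpow_conj (z : ℤ) (g : Gn n (wWord n k α γ)) :
    (inr (Multiplicative.ofAdd (1 : ℤ) ^ z) : Ghat n k α γ) * inl g *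
      (inr (Multiplicative.ofAdd (1 : ℤ) ^ z))⁻¹ = inl ((phi n k α γ ^ z) g) := by
  rw [← (map_inv (inr : Multiplicative ℤ →* Ghat n k α γ)), ← inl_aut]
  congr 1
  simp [zpowersHom_apply]

lemma inl_prod (b : ℤ) :
    ((List.range k).map fun i =>
        (inl (PresentedGroup.of ((b + S γ i : ℤ) : ZMod n)) : Ghat n k α γ) ^ α i).prod
      = inl (mkG n k α γ (pword n k α γ b)) := by
  unfold pword
  rw [map_list_prod, map_list_prod, List.map_map, List.map_map]
  congr 1
  apply List.map_congr_left
  intro i _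
  simp only [Function.comp_apply, map_zpow]
  rfl

lemma Phih (hγ : ∑ i ∈ Finset.range k, γ i = 0) :
    ∀ r ∈ relsX n k α γ, FreeGroup.lift (fPhi n k α γ) r = 1 := by
  intro r hr
  rcases hr with rfl | hr
  · -- the relator U
    unfold Uword
    rw [map_list_prod, List.map_map]
    have hmap : ∀ i : ℕ, ((FreeGroup.lift (fPhi n k α γ)) ∘ fun i =>
        FreeGroup.of true ^ α i * FreeGroup.of false ^ γ i) i
        = (inl (PresentedGroup.of (0 : ZMod n)) : Ghat n k α γ) ^ α i *
          (inr (Multiplicative.ofAdd (1 : ℤ)) : Ghat n k α γ) ^ γ i := by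
      intro i
      simp only [Function.comp_apply, map_mul, map_zpow, FreeGroup.lift_apply_of]
      rfl
    rw [List.map_congr_left fun i _ => hmap i]
    rw [tele]
    rw [hγ, zpow_zero, mul_one]
    have hfact : ∀ i : ℕ,
        (inr (Multiplicative.ofAdd (1 : ℤ)) : Ghat n k α γ) ^ S γ i *
          (inl (PresentedGroup.of (0 : ZMod n)) : Ghat n k α γ) ^ α i *
          (inr (Multiplicative.ofAdd (1 : ℤ)) : Ghat n k α γ) ^ (-(S γ i))
        = (inl (PresentedGroup.of ((0 + S γ i : ℤ) : ZMod n)) : Ghat n k α γ) ^ α i := by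
      intro i
      rw [← map_zpow inl, ← map_zpow inr, zpow_neg, ← map_zpow inr, inr_zpow_conj,
        map_zpow, phi_zpow, map_zpow]
      congr 3
      push_cast
      ring
    rw [List.map_congr_left fun i _ => hfact i, inl_prod, mk_pword, map_one]
  · -- the commutation relator
    rcases hr with rfl
    simp only [map_mul, map_inv, map_pow, FreeGroup.lift_apply_of]
    show (inl (PresentedGroup.of (0 : ZMod n)) : Ghat n k α γ)⁻¹ *
        ((inr (Multiplicative.ofAdd (1 : ℤ)) : Ghat n k α γ) ^ n)⁻¹ *
        inl (PresentedGroup.of (0 : ZMod n)) *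
        (inr (Multiplicative.ofAdd (1 : ℤ)) : Ghat n k α γ) ^ n = 1
    have hpow : (inr (Multiplicative.ofAdd (1 : ℤ)) : Ghat n k α γ) ^ (n : ℕ)
        = inr (Multiplicative.ofAdd (1 : ℤ) ^ (n : ℤ)) := by
      rw [zpow_natCast, map_pow]
    have hc : (inr (Multiplicative.ofAdd (1 : ℤ) ^ (n : ℤ)) : Ghat n k α γ) *
        inl (PresentedGroup.of (0 : ZMod n)) *
        (inr (Multiplicative.ofAdd (1 : ℤ) ^ (n : ℤ)))⁻¹
        = inl (PresentedGroup.of (0 : ZMod n)) := by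
      rw [inr_zpow_conj, phi_zpow]
      congr 2
      push_cast
      simp [ZMod.natCast_self]
    have hcomm : (inr (Multiplicative.ofAdd (1 : ℤ) ^ (n : ℤ)) : Ghat n k α γ) *
        inl (PresentedGroup.of (0 : ZMod n))
        = inl (PresentedGroup.of (0 : ZMod n)) *
          inr (Multiplicative.ofAdd (1 : ℤ) ^ (n : ℤ)) :=
      mul_inv_eq_iff_eq_mul.mp hc
    have h1 : ((inr (Multiplicative.ofAdd (1 : ℤ) ^ (n : ℤ)) : Ghat n k α γ))⁻¹ *
        inl (PresentedGroup.of (0 : ZMod n)) *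
        inr (Multiplicative.ofAdd (1 : ℤ) ^ (n : ℤ))
        = inl (PresentedGroup.of (0 : ZMod n)) := by
      rw [mul_assoc, ← hcomm, inv_mul_cancel_left]
    rw [hpow]
    calc (inl (PresentedGroup.of (0 : ZMod n)) : Ghat n k α γ)⁻¹ *
        (inr (Multiplicative.ofAdd (1 : ℤ) ^ (n : ℤ)))⁻¹ *
        inl (PresentedGroup.of (0 : ZMod n)) *
        inr (Multiplicative.ofAdd (1 : ℤ) ^ (n : ℤ))
        = (inl (PresentedGroup.of (0 : ZMod n)) : Ghat n k α γ)⁻¹ *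
          ((inr (Multiplicative.ofAdd (1 : ℤ) ^ (n : ℤ)))⁻¹ *
            inl (PresentedGroup.of (0 : ZMod n)) *
            inr (Multiplicative.ofAdd (1 : ℤ) ^ (n : ℤ))) := by
          simp only [mul_assoc]
      _ = 1 := by rw [h1, inv_mul_cancel]

/-- The homomorphism from `G` to the HNN extension. -/
noncomputable def Phi (hγ : ∑ i ∈ Finset.range k, γ i = 0) :
    GX n k α γ →* Ghat n k α γ :=
  PresentedGroup.toGroup (Phih n k α γ hγ)

lemma Phi_A (hγ : ∑ i ∈ Finset.range k, γ i = 0) :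
    Phi n k α γ hγ (A n k α γ) = inl (PresentedGroup.of (0 : ZMod n)) :=
  PresentedGroup.toGroup.of _

lemma Phi_C (hγ : ∑ i ∈ Finset.range k, γ i = 0) :
    Phi n k α γ hγ (C n k α γ) = inr (Multiplicative.ofAdd (1 : ℤ)) :=
  PresentedGroup.toGroup.of _

end CPaux
end

section
variable (n : ℕ) [NeZero n] (k : ℕ) (α γ : ℕ → ℤ)

namespace CPaux
set_option linter.unusedSectionVars false

open SemidirectProduct

lemma Psi_inl (hγ : ∑ i ∈ Finset.range k, γ i = 0) (g : Gn n (wWord n k α γ)) :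
    Psi n k α γ hγ (inl g) = psi0 n k α γ hγ g :=
  SemidirectProduct.lift_inl _ _ _ _

lemma Psi_inr (hγ : ∑ i ∈ Finset.range k, γ i = 0) (z : Multiplicative ℤ) :
    Psi n k α γ hγ (inr z) = C n k α γ ^ (Multiplicative.toAdd z) :=
  SemidirectProduct.lift_inr _ _ _ _

lemma x_zero : x n k α γ 0 = A n k α γ := by
  unfold x
  simp

lemma hPsiPhi (hγ : ∑ i ∈ Finset.range k, γ i = 0) :
    (Psi n k α γ hγ).comp (Phi n k α γ hγ) = MonoidHom.id (GX n k α γ) := by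
  apply PresentedGroup.ext
  intro b
  cases b
  · show Psi n k α γ hγ (Phi n k α γ hγ (C n k α γ)) = C n k α γ
    rw [Phi_C, Psi_inr]
    simp
  · show Psi n k α γ hγ (Phi n k α γ hγ (A n k α γ)) = A n k α γ
    rw [Phi_A, Psi_inl, psi0_of]
    rw [show ((0 : ZMod n).val : ℤ) = 0 by simp [ZMod.val_zero], x_zero]

lemma hPhiPsi (hγ : ∑ i ∈ Finset.range k, γ i = 0) :
    (Phi n k α γ hγ).comp (Psi n k α γ hγ) = MonoidHom.id (Ghat n k α γ) := by
  apply SemidirectProduct.hom_ext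
  · apply PresentedGroup.ext
    intro i
    simp only [MonoidHom.comp_apply, MonoidHom.id_apply]
    rw [show ((inl (PresentedGroup.of i) : Ghat n k α γ)) = inl (PresentedGroup.of i) from rfl]
    rw [Psi_inl, psi0_of, x_def, map_mul, map_mul, map_zpow, map_zpow, Phi_A, Phi_C,
      ← map_zpow inr, zpow_neg, ← map_zpow inr, inr_zpow_conj, phi_zpow]
    congr 2
    rw [zero_add, val_coe_int]
  · apply MonoidHom.ext_mint
    simp only [MonoidHom.comp_apply, MonoidHom.id_apply]
    rw [Psi_inr]
    simp only [toAdd_ofAdd, zpow_one]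
    rw [Phi_C]

/-- The isomorphism between `G` and the natural HNN extension. -/
noncomputable def eIso (hγ : ∑ i ∈ Finset.range k, γ i = 0) :
    GX n k α γ ≃* Ghat n k α γ :=
  MonoidHom.toMulEquiv (Phi n k α γ hγ) (Psi n k α γ hγ)
    (hPsiPhi n k α γ hγ) (hPhiPsi n k α γ hγ)

end CPaux
end

section
variable (n : ℕ) [NeZero n] (k : ℕ) (α γ : ℕ → ℤ)

namespace CPaux
set_option linter.unusedSectionVars false

open SemidirectProduct

lemma ab_key1 (i : ZMod n) :
    Abelianization.of (inl (PresentedGroup.of (i + 1)) : Ghat n k α γ)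
      = Abelianization.of (inl (PresentedGroup.of i) : Ghat n k α γ) := by
  have h : (inl (PresentedGroup.of (i + 1)) : Ghat n k α γ) =
      inr (Multiplicative.ofAdd (1 : ℤ) ^ (1 : ℤ)) * inl (PresentedGroup.of i) *
        (inr (Multiplicative.ofAdd (1 : ℤ) ^ (1 : ℤ)))⁻¹ := by
    rw [inr_zpow_conj, phi_zpow]
    congr 2
    push_cast
    ring
  rw [h, map_mul, map_mul, map_inv]
  exact mul_inv_cancel_comm _ _

lemma ab_key (i : ZMod n) :
    Abelianization.of (inl (PresentedGroup.of i) : Ghat n k α γ)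
      = Abelianization.of (inl (PresentedGroup.of (0 : ZMod n)) : Ghat n k α γ) := by
  have key2 : ∀ m : ℕ,
      Abelianization.of (inl (PresentedGroup.of ((m : ZMod n))) : Ghat n k α γ)
        = Abelianization.of (inl (PresentedGroup.of (0 : ZMod n)) : Ghat n k α γ) := by
    intro m
    induction m with
    | zero => norm_num
    | succ m ih =>
      rw [show ((m + 1 : ℕ) : ZMod n) = (m : ZMod n) + 1 by push_cast; ring]
      rw [ab_key1, ih]
  have hv : ((i.val : ℕ) : ZMod n) = i := by rw [ZMod.natCast_val, ZMod.cast_id]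
  rw [← hv]
  exact key2 _

lemma ab_one (hα : ∑ i ∈ Finset.range k, α i = 1) :
    Abelianization.of (inl (PresentedGroup.of (0 : ZMod n)) : Ghat n k α γ) = 1 := by
  have h2 := congrArg (⇑(Abelianization.of (G := Ghat n k α γ))) (inl_prod n k α γ 1)
  rw [mk_pword, map_one, map_one] at h2
  rw [map_list_prod, List.map_map] at h2
  have hcongr : ∀ i : ℕ, ((⇑(Abelianization.of (G := Ghat n k α γ))) ∘ fun i =>
      (inl (PresentedGroup.of ((1 + S γ i : ℤ) : ZMod n)) : Ghat n k α γ) ^ α i) i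
      = Abelianization.of (inl (PresentedGroup.of (0 : ZMod n)) : Ghat n k α γ) ^ α i := by
    intro i
    simp only [Function.comp_apply, map_zpow]
    rw [ab_key]
  rw [List.map_congr_left fun i _ => hcongr i, zprod_const, hα, zpow_one] at h2
  exact h2

lemma inl_mem_commutator (hα : ∑ i ∈ Finset.range k, α i = 1) (i : ZMod n) :
    (inl (PresentedGroup.of i) : Ghat n k α γ) ∈ commutator (Ghat n k α γ) := by
  have h : Abelianization.of (inl (PresentedGroup.of i) : Ghat n k α γ) = 1 :=
    (ab_key n k α γ i).trans (ab_one n k α γ hα)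
  have h' : ((inl (PresentedGroup.of i) : Ghat n k α γ) :
      Ghat n k α γ ⧸ commutator (Ghat n k α γ)) = 1 := h
  exact (QuotientGroup.eq_one_iff _).mp h'

lemma comm_eq (hα : ∑ i ∈ Finset.range k, α i = 1) :
    commutator (Ghat n k α γ)
      = (inl : Gn n (wWord n k α γ) →* Ghat n k α γ).range := by
  apply le_antisymm
  · rw [SemidirectProduct.range_inl_eq_ker_rightHom]
    exact Abelianization.commutator_subset_ker SemidirectProduct.rightHom
  · rintro _ ⟨g, rfl⟩
    have hg : g ∈ Subgroup.closure
        (Set.range (PresentedGroup.of (rels := cycRels n (wWord n k α γ)))) := by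
      rw [PresentedGroup.closure_range_of]
      exact Subgroup.mem_top g
    refine Subgroup.closure_induction
      (p := fun x _ => (inl x : Ghat n k α γ) ∈ commutator (Ghat n k α γ))
      ?_ ?_ ?_ ?_ hg
    · rintro x ⟨i, rfl⟩
      exact inl_mem_commutator n k α γ hα i
    · rw [map_one]
      exact Subgroup.one_mem _
    · intro a b _ _ ha hb
      rw [map_mul]
      exact Subgroup.mul_mem _ ha hb
    · intro a _ ha
      rw [map_inv]
      exact Subgroup.inv_mem _ ha

/-- The isomorphism between the commutator subgroup and the cyclically presented group. -/
noncomputable def commIso (hα : ∑ i ∈ Finset.range k, α i = 1)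
    (hγ : ∑ i ∈ Finset.range k, γ i = 0) :
    ↥(commutator (GX n k α γ)) ≃* Gn n (wWord n k α γ) := by
  have hmap : Subgroup.map ((eIso n k α γ hγ : GX n k α γ →* Ghat n k α γ))
      (commutator (GX n k α γ)) = commutator (Ghat n k α γ) := by
    rw [commutator_def, commutator_def, Subgroup.map_commutator,
      Subgroup.map_top_of_surjective
        ((eIso n k α γ hγ : GX n k α γ →* Ghat n k α γ))
        (by exact (eIso n k α γ hγ).surjective)]
  exact (((eIso n k α γ hγ).subgroupMap _).trans
      (MulEquiv.subgroupCongr (hmap.trans (comm_eq n k α γ hα)))).trans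
    (MonoidHom.ofInjective SemidirectProduct.inl_injective).symm

end CPaux
end


/-- Let `G = ⟨a, c ∣ U(a,c), [a,cⁿ]⟩` where `U` has exponent sum `1` in `a` and `0` in
`c`.  Then the commutator subgroup `G′` has the cyclic presentation `G_n(w)` with
`w = x₁^{α₁} x_{1+γ₁}^{α₂} ⋯ x_{1+γ₁+⋯+γ_{k-1}}^{α_k}` (subscripts mod `n`), and `G` is
isomorphic to the natural HNN extension `Ĝ_n(w) = G_n(w) ⋊_φ ℤ` (`φ` the shift
automorphism). -/
theorem commutator_subgroup_cyclically_presented (n : ℕ) [NeZero n] (k : ℕ)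
    (α γ : ℕ → ℤ)
    (hα : ∑ i ∈ Finset.range k, α i = 1) (hγ : ∑ i ∈ Finset.range k, γ i = 0) :
    Nonempty (↥(commutator (PresentedGroup (relsX n k α γ))) ≃* Gn n (wWord n k α γ)) ∧
      ∃ φ : MulAut (Gn n (wWord n k α γ)),
        (∀ i : ZMod n, φ (PresentedGroup.of i) = PresentedGroup.of (i + 1)) ∧
        Nonempty (PresentedGroup (relsX n k α γ) ≃*
          (Gn n (wWord n k α γ) ⋊[zpowersHom (MulAut (Gn n (wWord n k α γ))) φ]
            Multiplicative ℤ)) := by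
  constructor
  · exact ⟨CPaux.commIso n k α γ hα hγ⟩
  · exact ⟨CPaux.phi n k α γ, CPaux.phi_of n k α γ, ⟨CPaux.eIso n k α γ hγ⟩⟩
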